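/- Let G be a finite simple graph with maximum degree Δ. Then there exist Δ spanning subgraphs F_1, …, F_Δ of G, each of which is a forest (i.e., acyclic), such that every edge of G belongs to at least one F_i. In particular, the arboricity of G is at most its maximum degree. -/

import Mathlib

open SimpleGraph

private lemma sup_edge_acyclic' {V : Type*} {G : SimpleGraph V} (hG : G.IsAcyclic)
    {u v : V} (hne : u ≠ v) (hr : ¬G.Reachable u v) :
    (G ⊔ SimpleGraph.edge u v).IsAcyclic := by
  intro a c hc
  by_cases he : s(u, v) ∈ c.edges
  · have h2 := (adj_and_reachable_delete_edges_iff_exists_cycle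
      (G := G ⊔ SimpleGraph.edge u v)).mpr ⟨a, c, hc, he⟩
    apply hr
    refine h2.2.mono ?_
    intro x y hxy
    rw [deleteEdges_adj] at hxy
    obtain ⟨hxy1, hxy2⟩ := hxy
    rcases hxy1 with h | h
    · exact h
    · exfalso
      apply hxy2
      suffices s(x, y) ∈ ({s(u, v)} : Set (Sym2 V)) ∧ x ≠ y from this.1
      rw [edge_adj] at h
      refine ⟨?_, h.2⟩
      rcases h.1 with ⟨rfl, rfl⟩ | ⟨rfl, rfl⟩
      · simp
      · simp [Sym2.eq_swap]
  · have hp : ∀ e ∈ c.edges, e ∈ G.edgeSet := by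
      intro e hec
      have := c.edges_subset_edgeSet hec
      rw [edgeSet_sup, edge_edgeSet_of_ne hne] at this
      rcases this with h | h
      · exact h
      · exact absurd (h ▸ hec) he
    exact hG (c.transfer G hp) (hc.transfer hp)

private lemma forest_cover_aux {V : Type*} [Fintype V] [DecidableEq V] :
    ∀ (m : ℕ) (G : SimpleGraph V), G.edgeSet.ncard ≤ m →
    ∀ n : ℕ, (∀ v : V, (G.neighborSet v).ncard ≤ n) →
    ∃ F : Fin n → SimpleGraph V,
      (∀ i, F i ≤ G ∧ (F i).IsAcyclic) ∧
      (∀ e ∈ G.edgeSet, ∃ i, e ∈ (F i).edgeSet) ∧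
      (∀ i j, i ≠ j → Disjoint (F i).edgeSet (F j).edgeSet) := by
  intro m
  induction m with
  | zero =>
    intro G hcard n _
    have hempty : G.edgeSet = ∅ := by
      have := Set.ncard_eq_zero (Set.toFinite _) |>.mp (Nat.le_zero.mp hcard)
      exact this
    refine ⟨fun _ => ⊥, fun i => ⟨bot_le, isAcyclic_bot⟩, ?_, ?_⟩
    · intro e he; rw [hempty] at he; exact absurd he (Set.notMem_empty e)
    · intro i j _; simp
  | succ m ih =>
    intro G hcard n hdeg
    rcases Set.eq_empty_or_nonempty G.edgeSet with hempty | ⟨e, he⟩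
    · refine ⟨fun _ => ⊥, fun i => ⟨bot_le, isAcyclic_bot⟩, ?_, ?_⟩
      · intro e he; rw [hempty] at he; exact absurd he (Set.notMem_empty e)
      · intro i j _; simp
    obtain ⟨u, v⟩ := e
    have he' : s(u, v) ∈ G.edgeSet := he
    have hadj : G.Adj u v := he
    have hne : u ≠ v := hadj.ne
    set G' : SimpleGraph V := G \ SimpleGraph.edge u v with hG'
    have hle : G' ≤ G := sdiff_le
    have hES : G'.edgeSet = G.edgeSet \ {s(u, v)} := by
      rw [hG', edgeSet_sdiff, edge_edgeSet_of_ne hne]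
    have hcard' : G'.edgeSet.ncard ≤ m := by
      rw [hES]
      have h1 := Set.ncard_diff_singleton_add_one he' (Set.toFinite _)
      omega
    have hdeg' : ∀ w : V, (G'.neighborSet w).ncard ≤ n := fun w =>
      le_trans (Set.ncard_le_ncard (fun x hx => hle hx) (Set.toFinite _)) (hdeg w)
    obtain ⟨F, hforest, hcover, hdisj⟩ := ih G' hcard' n hdeg'
    -- the neighbor set of u in G' is the neighbor set in G minus v
    have hNu : G'.neighborSet u = G.neighborSet u \ {v} := by
      ext w
      simp only [mem_neighborSet, Set.mem_diff, Set.mem_singleton_iff, hG', sdiff_adj]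
      constructor
      · rintro ⟨h1, h2⟩
        exact ⟨h1, fun hwv => h2 (by rw [edge_adj]; exact ⟨Or.inl ⟨rfl, hwv⟩, h1.ne⟩)⟩
      · rintro ⟨h1, h2⟩
        refine ⟨h1, fun hc => ?_⟩
        rw [edge_adj] at hc
        rcases hc.1 with ⟨-, rfl⟩ | ⟨rfl, rfl⟩
        · exact h2 rfl
        · exact hne rfl
    have hNucard : (G'.neighborSet u).ncard < n := by
      have hv : v ∈ G.neighborSet u := hadj
      have h1 : (G.neighborSet u \ {v}).ncard + 1 = (G.neighborSet u).ncard :=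
        Set.ncard_diff_singleton_add_one hv (Set.toFinite _)
      have h2 := hdeg u
      rw [hNu]
      omega
    -- find a forest in which u is isolated
    have hiso : ∃ i : Fin n, ∀ w, ¬(F i).Adj u w := by
      by_contra hcon
      push_neg at hcon
      choose f hf using hcon
      have hfin : (G'.neighborSet u).Finite := Set.toFinite _
      have hmaps : ∀ i : Fin n, i ∈ (Finset.univ : Finset (Fin n)) →
          f i ∈ hfin.toFinset := by
        intro i _
        rw [Set.Finite.mem_toFinset]
        exact ((hforest i).1 (hf i) : G'.Adj u (f i))
      have hlt : hfin.toFinset.card < (Finset.univ : Finset (Fin n)).card := by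
        rw [Finset.card_univ, Fintype.card_fin,
          ← Set.ncard_eq_toFinset_card _ hfin]
        exact hNucard
      obtain ⟨i, _, j, _, hij, hfij⟩ :=
        Finset.exists_ne_map_eq_of_card_lt_of_maps_to hlt hmaps
      have h1 : s(u, f i) ∈ (F i).edgeSet := hf i
      have h2 : s(u, f i) ∈ (F j).edgeSet := hfij ▸ hf j
      exact (hdisj i j hij).ne_of_mem h1 h2 rfl
    obtain ⟨i₀, hu⟩ := hiso
    have hur : ¬(F i₀).Reachable u v := by
      rintro ⟨w⟩
      cases w with
      | nil => exact hne rfl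
      | cons h p => exact hu _ h
    set F' : Fin n → SimpleGraph V :=
      Function.update F i₀ (F i₀ ⊔ SimpleGraph.edge u v) with hF'
    have hFle : ∀ i, F i ≤ F' i := by
      intro i
      by_cases h : i = i₀
      · subst h; rw [hF', Function.update_self]; exact le_sup_left
      · rw [hF', Function.update_of_ne h]
    have hedgele : SimpleGraph.edge u v ≤ G := by
      intro x y hxy
      rw [edge_adj] at hxy
      rcases hxy.1 with ⟨rfl, rfl⟩ | ⟨rfl, rfl⟩
      · exact hadj
      · exact hadj.symm
    have hi₀E : (F' i₀).edgeSet = (F i₀).edgeSet ∪ {s(u, v)} := by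
      rw [hF', Function.update_self, edgeSet_sup, edge_edgeSet_of_ne hne]
    have hsuv_not : ∀ i, s(u, v) ∉ (F i).edgeSet := by
      intro i hmem
      have := edgeSet_subset_edgeSet.mpr (hforest i).1 hmem
      rw [hES] at this
      exact this.2 rfl
    refine ⟨F', ?_, ?_, ?_⟩
    · intro i
      by_cases h : i = i₀
      · rw [h, hF', Function.update_self]
        exact ⟨sup_le (le_trans (hforest i₀).1 hle) hedgele,
          sup_edge_acyclic' (hforest i₀).2 hne hur⟩
      · rw [hF', Function.update_of_ne h]
        exact ⟨le_trans (hforest i).1 hle, (hforest i).2⟩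
    · intro e heG
      by_cases h : e = s(u, v)
      · exact ⟨i₀, by rw [hi₀E]; exact Or.inr (by simp [h])⟩
      · have : e ∈ G'.edgeSet := by rw [hES]; exact ⟨heG, h⟩
        obtain ⟨i, hi⟩ := hcover e this
        exact ⟨i, edgeSet_subset_edgeSet.mpr (hFle i) hi⟩
    · intro i j hij
      have key : ∀ k, k ≠ i₀ → (F' k).edgeSet = (F k).edgeSet := fun k hk => by
        rw [hF', Function.update_of_ne hk]
      by_cases hi : i = i₀
      · subst hi
        rw [hi₀E, key j (Ne.symm hij)]
        refine Set.disjoint_union_left.mpr ⟨hdisj _ _ hij, ?_⟩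
        rw [Set.disjoint_singleton_left]
        exact hsuv_not j
      · by_cases hj : j = i₀
        · subst hj
          rw [hi₀E, key i hi]
          refine Set.disjoint_union_right.mpr ⟨hdisj _ _ hij, ?_⟩
          rw [Set.disjoint_singleton_right]
          exact hsuv_not i
        · rw [key i hi, key j hj]
          exact hdisj _ _ hij

/-- A finite simple graph with maximum degree `Δ` can be covered by `Δ`
spanning forests; in particular its arboricity is at most its maximum degree. -/
theorem arboricity_le_maxDegree {V : Type*} [Fintype V] [DecidableEq V]
    (G : SimpleGraph V) [DecidableRel G.Adj] :
    ∃ F : Fin G.maxDegree → SimpleGraph V,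
      (∀ i, F i ≤ G ∧ (F i).IsAcyclic) ∧
      ∀ e ∈ G.edgeSet, ∃ i, e ∈ (F i).edgeSet := by
  obtain ⟨F, h1, h2, _⟩ := forest_cover_aux G.edgeSet.ncard G le_rfl G.maxDegree
    (fun v => by
      have h := G.degree_le_maxDegree v
      have heq : (G.neighborSet v).ncard = G.degree v := by
        rw [← card_neighborFinset_eq_degree, neighborFinset]
        exact Set.ncard_eq_toFinset_card' _
      rwa [heq])
  exact ⟨F, h1, h2⟩
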